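/- Let Q : ℂ^{r+1} → Matrix (Fin (N+1)) (Fin (N+1)) ℂ be a linear map such that Q x is a symmetric matrix for every x, and define F : ℂ^{r+1} × ℂ^{N+1} → ℂ by F(x,u) = uᵀ (Q x) u. Then the following are equivalent: (a) for every nonzero u ∈ ℂ^{N+1} with F(x,u) = 0 for all x ∈ ℂ^{r+1}, the only x ∈ ℂ^{r+1} with (Q x)·u = 0 is x = 0; (b) for every x ≠ 0 and u ≠ 0 with F(x,u) = 0, the Fréchet derivative of F at (x,u) is a nonzero linear functional. (Condition (a) says that the common zero set of the quadrics is a regular complete intersection; condition (b) says that the Lagrange hypersurface L = {F = 0} ⊂ ℂP^r × ℂP^N is nonsingular.) -/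

import Mathlib

open Matrix

private lemma symm_dot {N : ℕ} {M : Matrix (Fin (N+1)) (Fin (N+1)) ℂ} (hM : M.IsSymm)
    (u v : Fin (N+1) → ℂ) : u ⬝ᵥ M.mulVec v = v ⬝ᵥ M.mulVec u := by
  rw [dotProduct_mulVec, ← mulVec_transpose, hM.eq, dotProduct_comm]

private noncomputable def coordCLM {r N : ℕ} (i : Fin (N+1)) :
    ((Fin (r+1) → ℂ) × (Fin (N+1) → ℂ)) →L[ℂ] ℂ :=
  (ContinuousLinearMap.proj i).comp (ContinuousLinearMap.snd ℂ _ _)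

@[simp] private lemma coordCLM_apply {r N : ℕ} (i : Fin (N+1))
    (q : (Fin (r+1) → ℂ) × (Fin (N+1) → ℂ)) : coordCLM i q = q.2 i := rfl

private noncomputable def entryCLM {r N : ℕ}
    (Q : (Fin (r + 1) → ℂ) →ₗ[ℂ] Matrix (Fin (N + 1)) (Fin (N + 1)) ℂ)
    (i j : Fin (N+1)) : ((Fin (r+1) → ℂ) × (Fin (N+1) → ℂ)) →L[ℂ] ℂ :=
  LinearMap.toContinuousLinearMap
    ((LinearMap.proj j).comp ((LinearMap.proj i).comp (Q.comp (LinearMap.fst ℂ _ _))))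

@[simp] private lemma entryCLM_apply {r N : ℕ}
    (Q : (Fin (r + 1) → ℂ) →ₗ[ℂ] Matrix (Fin (N + 1)) (Fin (N + 1)) ℂ)
    (i j : Fin (N+1)) (q : (Fin (r+1) → ℂ) × (Fin (N+1) → ℂ)) :
    entryCLM Q i j q = Q q.1 i j := rfl

private lemma hasFD {r N : ℕ}
    (Q : (Fin (r + 1) → ℂ) →ₗ[ℂ] Matrix (Fin (N + 1)) (Fin (N + 1)) ℂ)
    (x : Fin (r+1) → ℂ) (u : Fin (N+1) → ℂ) :
    HasFDerivAt (fun q : (Fin (r + 1) → ℂ) × (Fin (N + 1) → ℂ) =>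
        q.2 ⬝ᵥ (Q q.1).mulVec q.2)
      (∑ i, ∑ j, (u i • ((Q x i j) • coordCLM j + (u j) • entryCLM Q i j)
        + (Q x i j * u j) • coordCLM i)) (x, u) := by
  have h : (fun q : (Fin (r + 1) → ℂ) × (Fin (N + 1) → ℂ) => q.2 ⬝ᵥ (Q q.1).mulVec q.2)
      = fun q => ∑ i, ∑ j, (coordCLM i q) * (entryCLM Q i j q * coordCLM (r := r) j q) := by
    funext q
    simp [dotProduct, mulVec, Finset.mul_sum]
  rw [h]
  apply HasFDerivAt.fun_sum; intro i _
  apply HasFDerivAt.fun_sum; intro j _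
  have := ((coordCLM (r := r) i).hasFDerivAt (x := (x,u))).fun_mul
    (((entryCLM Q i j).hasFDerivAt (x := (x,u))).fun_mul
      ((coordCLM (r := r) j).hasFDerivAt (x := (x,u))))
  simpa using this

private lemma fderiv_formula {r N : ℕ}
    (Q : (Fin (r + 1) → ℂ) →ₗ[ℂ] Matrix (Fin (N + 1)) (Fin (N + 1)) ℂ)
    (x dx : Fin (r+1) → ℂ) (u du : Fin (N+1) → ℂ) :
    fderiv ℂ (fun q : (Fin (r + 1) → ℂ) × (Fin (N + 1) → ℂ) =>
        q.2 ⬝ᵥ (Q q.1).mulVec q.2) (x, u) (dx, du)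
      = u ⬝ᵥ (Q dx).mulVec u + u ⬝ᵥ (Q x).mulVec du + du ⬝ᵥ (Q x).mulVec u := by
  rw [(hasFD Q x u).fderiv]
  have expand : ∀ (M : Matrix (Fin (N+1)) (Fin (N+1)) ℂ) (v w : Fin (N+1) → ℂ),
      v ⬝ᵥ M.mulVec w = ∑ i, ∑ j, v i * (M i j * w j) := by
    intro M v w; simp [dotProduct, mulVec, Finset.mul_sum]
  rw [expand, expand, expand]
  simp only [ContinuousLinearMap.coe_sum', Finset.sum_apply,
    ContinuousLinearMap.add_apply, ContinuousLinearMap.smul_apply,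
    coordCLM_apply, entryCLM_apply, smul_eq_mul]
  rw [← Finset.sum_add_distrib, ← Finset.sum_add_distrib]
  refine Finset.sum_congr rfl fun i _ => ?_
  rw [← Finset.sum_add_distrib, ← Finset.sum_add_distrib]
  refine Finset.sum_congr rfl fun j _ => ?_
  ring

theorem regularCI_iff_lagrange_nonsingular (r N : ℕ)
    (Q : (Fin (r + 1) → ℂ) →ₗ[ℂ] Matrix (Fin (N + 1)) (Fin (N + 1)) ℂ)
    (hsymm : ∀ x, (Q x).IsSymm) :
    (∀ u : Fin (N + 1) → ℂ, u ≠ 0 →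
        (∀ x : Fin (r + 1) → ℂ, u ⬝ᵥ (Q x).mulVec u = 0) →
        ∀ x : Fin (r + 1) → ℂ, (Q x).mulVec u = 0 → x = 0) ↔
    (∀ p : (Fin (r + 1) → ℂ) × (Fin (N + 1) → ℂ), p.1 ≠ 0 → p.2 ≠ 0 →
        p.2 ⬝ᵥ (Q p.1).mulVec p.2 = 0 →
        fderiv ℂ (fun q : (Fin (r + 1) → ℂ) × (Fin (N + 1) → ℂ) =>
          q.2 ⬝ᵥ (Q q.1).mulVec q.2) p ≠ 0) := by
  constructor
  · intro ha p hx hu _ h0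
    obtain ⟨x, u⟩ := p
    have hval : ∀ dx du, u ⬝ᵥ (Q dx).mulVec u + u ⬝ᵥ (Q x).mulVec du + du ⬝ᵥ (Q x).mulVec u = 0 := by
      intro dx du
      rw [← fderiv_formula, h0]; rfl
    have hall : ∀ dx, u ⬝ᵥ (Q dx).mulVec u = 0 := by
      intro dx
      have := hval dx 0
      simpa using this
    have hQx : (Q x).mulVec u = 0 := by
      funext i
      have := hval 0 (Pi.single i 1)
      rw [symm_dot (hsymm x)] at this
      simp [map_zero] at this
      have h2 : (2 : ℂ) * (Pi.single i 1 ⬝ᵥ (Q x).mulVec u) = 0 := by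
        rw [two_mul]
        simpa [symm_dot (hsymm x)] using this
      field_simp at h2
      rcases mul_eq_zero.mp h2 with h | h
      · exact absurd h two_ne_zero
      · simpa using h
    exact hx (ha u hu hall x hQx)
  · intro hb u hu hall x hQx
    by_contra hx
    apply hb (x, u) hx hu (hall x)
    apply ContinuousLinearMap.ext
    intro v
    have := fderiv_formula Q x v.1 u v.2
    simp only [Prod.mk.eta] at this
    rw [this, hall v.1, symm_dot (hsymm x), hQx]
    simp
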